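/- Given an n×n real symmetric matrix A with nonnegative entries and strictly positive degrees d_i = Σ_j A_{ij}, let D = diag(d_1,…,d_n) and define the normalized graph Laplacian L_norm = I − D^{−1/2} A D^{−1/2}. Suppose additionally that the weighted graph defined by A is connected, i.e., for every pair of indices i, j there exists a natural number k with (A^k)_{ij} > 0. Then the kernel of L_norm is one-dimensional: every x ∈ ℝ^n with L_norm x = 0 is a scalar multiple of the vector v with v_i = √d_i. In particular, 0 is a simple eigenvalue of L_norm. -/

import Mathlib

open Matrix BigOperators

/-- If the weighted graph given by the symmetric nonnegative matrix `A` (with positive degrees)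
is connected, i.e. for all `i j` there is `k` with `(A^k)_{ij} > 0`, then the kernel of the
normalized Laplacian `L = I - D^{-1/2} A D^{-1/2}` is one-dimensional: every `x` with `L x = 0`
is a scalar multiple of the vector `v_i = √d_i`. -/
theorem normalized_laplacian_kernel_of_connected
    (n : ℕ) (A : Matrix (Fin n) (Fin n) ℝ) (hA : A.IsSymm)
    (hnonneg : ∀ i j, 0 ≤ A i j) (hdeg : ∀ i, 0 < ∑ j, A i j)
    (hconn : ∀ i j, ∃ k : ℕ, 0 < (A ^ k) i j) :
    let d : Fin n → ℝ := fun i => ∑ j, A i j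
    let L : Matrix (Fin n) (Fin n) ℝ :=
      1 - Matrix.of fun i j => A i j / (Real.sqrt (d i) * Real.sqrt (d j))
    ∀ x : Fin n → ℝ, L.mulVec x = 0 →
      ∃ c : ℝ, x = c • fun i => Real.sqrt (d i) := by
  intro d L x hx
  rcases Nat.eq_zero_or_pos n with hn | hn
  · exact ⟨0, funext fun i => absurd i.isLt (by omega)⟩
  haveI : Nonempty (Fin n) := ⟨⟨0, hn⟩⟩
  set s : Fin n → ℝ := fun i => Real.sqrt (d i) with hs
  have hspos : ∀ i, 0 < s i := fun i => Real.sqrt_pos.mpr (hdeg i)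
  set y : Fin n → ℝ := fun i => x i / s i with hy
  have hxy : ∀ i, x i = s i * y i := by
    intro i
    show x i = s i * (x i / s i)
    rw [mul_div_assoc']
    exact (mul_div_cancel_left₀ (x i) (hspos i).ne').symm
  have hss : ∀ i, s i * s i = d i := fun i =>
    Real.mul_self_sqrt (le_of_lt (hdeg i))
  -- harmonicity
  have hharm : ∀ i, d i * y i = ∑ j, A i j * y j := by
    intro i
    have h0 : L.mulVec x i = 0 := by rw [hx]; rfl
    have h1 : x i - ∑ j, A i j / (s i * s j) * x j = 0 := by
      have h0' : (1 : Matrix (Fin n) (Fin n) ℝ).mulVec x i -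
          (Matrix.of fun i j => A i j / (s i * s j)).mulVec x i = 0 := by
        rw [← Pi.sub_apply, ← Matrix.sub_mulVec]; exact h0
      simpa [Matrix.one_mulVec, Matrix.mulVec, dotProduct,
        Matrix.one_apply, ite_mul] using h0'
    have h2 : x i = ∑ j, A i j / (s i * s j) * x j := by linarith
    have h3 : s i * x i = ∑ j, A i j * y j := by
      rw [h2, Finset.mul_sum]
      refine Finset.sum_congr rfl fun j _ => ?_
      rw [hxy j]
      have h4 := (hspos i).ne'
      have h5 := (hspos j).ne'
      field_simp
    calc d i * y i = s i * (s i * y i) := by rw [← hss i]; ring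
      _ = s i * x i := by rw [← hxy i]
      _ = ∑ j, A i j * y j := h3
  -- maximum
  obtain ⟨i0, hi0⟩ := Finite.exists_max y
  set M := y i0 with hM
  -- one-step propagation
  have hstep : ∀ i, y i = M → ∀ j, 0 < A i j → y j = M := by
    intro i hi j hAij
    have hle : ∀ j ∈ Finset.univ, A i j * y j ≤ A i j * M :=
      fun j _ => mul_le_mul_of_nonneg_left (hi0 j) (hnonneg i j)
    have heq : ∑ j, A i j * y j = ∑ j, A i j * M := by
      rw [← hharm i, hi, ← Finset.sum_mul]
    have hall := (Finset.sum_eq_sum_iff_of_le hle).mp heq j (Finset.mem_univ j)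
    exact le_antisymm (hi0 j) (le_of_mul_le_mul_left (le_of_eq hall.symm) hAij)
  -- powers are nonneg
  have hpow : ∀ k : ℕ, ∀ i j, 0 ≤ (A ^ k) i j := by
    intro k
    induction k with
    | zero => intro i j; simp [Matrix.one_apply]; split <;> norm_num
    | succ m ih =>
      intro i j
      rw [pow_succ, Matrix.mul_apply]
      exact Finset.sum_nonneg fun m' _ => mul_nonneg (ih i m') (hnonneg m' j)
  -- k-step propagation
  have hprop : ∀ k : ℕ, ∀ i j, y i = M → 0 < (A ^ k) i j → y j = M := by
    intro k
    induction k with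
    | zero =>
      intro i j hi hij
      rw [pow_zero, Matrix.one_apply] at hij
      by_cases h : i = j
      · exact h ▸ hi
      · simp [h] at hij
    | succ m ih =>
      intro i j hi hij
      rw [pow_succ, Matrix.mul_apply] at hij
      obtain ⟨m', -, hm'⟩ := Finset.exists_lt_of_sum_lt (by
        simpa using hij : ∑ m' : Fin n, (0:ℝ) < ∑ m', (A ^ m) i m' * A m' j)
      have h1 : 0 < (A ^ m) i m' := by
        by_contra h
        push_neg at h
        have := hpow m i m'
        have : (A ^ m) i m' = 0 := le_antisymm h this
        simp [this] at hm'
      have h2 : 0 < A m' j := by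
        by_contra h
        push_neg at h
        have : A m' j = 0 := le_antisymm h (hnonneg m' j)
        simp [this] at hm'
      exact hstep m' (ih i m' hi h1) j h2
  have hconst : ∀ j, y j = M := by
    intro j
    obtain ⟨k, hk⟩ := hconn i0 j
    exact hprop k i0 j rfl hk
  refine ⟨M, funext fun i => ?_⟩
  simp only [Pi.smul_apply, smul_eq_mul]
  rw [hxy i, hconst i]
  ring
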